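/- Let N ≥ 1, let A be a nonempty bounded subset of ℝ^N with dim̄_B A < N, and let δ > 0. Then the abscissa of convergence of the tube zeta function equals the upper box dimension: inf{α ∈ ℝ : ∫_0^δ t^{α−N−1} |A_t| dt < ∞} = dim̄_B A. -/

import Mathlib

open MeasureTheory Metric Filter Set
open scoped ENNReal Topology

/-- The upper `r`-dimensional Minkowski content of a subset of `ℝ^N`. -/
noncomputable def upperMink (N : ℕ) (A : Set (EuclideanSpace ℝ (Fin N))) (r : ℝ) : ℝ≥0∞ :=
  Filter.limsup (fun t : ℝ => volume (thickening t A) / ENNReal.ofReal (t ^ ((N : ℝ) - r)))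
    (𝓝[>] (0 : ℝ))

/-- The upper box (Minkowski) dimension of a subset of `ℝ^N`. -/
noncomputable def upperBoxDim (N : ℕ) (A : Set (EuclideanSpace ℝ (Fin N))) : ℝ :=
  sInf {r : ℝ | 0 < r ∧ upperMink N A r = 0}

section Aux

variable {N : ℕ} {A : Set (EuclideanSpace ℝ (Fin N))}

lemma vol_mono : Monotone (fun t : ℝ => volume (thickening t A)) :=
  fun _ _ h => measure_mono (thickening_mono h A)

lemma vol_meas : Measurable (fun t : ℝ => volume (thickening t A)) :=
  vol_mono.measurable

lemma vol_fin (hb : Bornology.IsBounded A) (t : ℝ) : volume (thickening t A) ≠ ∞ :=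
  (hb.thickening.measure_lt_top).ne

lemma mink_antitone : Antitone (upperMink N A) := by
  intro a b hab
  apply limsup_le_limsup _ isCobounded_le_of_bot isBounded_le_of_top
  filter_upwards [Ioo_mem_nhdsGT (zero_lt_one)] with t ht
  exact ENNReal.div_le_div_left
    (ENNReal.ofReal_le_ofReal
      (Real.rpow_le_rpow_of_exponent_ge ht.1 ht.2.le (by linarith))) _

lemma mink_top (hb : Bornology.IsBounded A) : upperMink N A ((N : ℝ) + 1) = 0 := by
  have C := vol_fin hb 1
  have h1 : Tendsto (fun t : ℝ => volume (thickening (1:ℝ) A) * ENNReal.ofReal t)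
      (𝓝[>] (0:ℝ)) (𝓝 0) := by
    have : Tendsto (fun t : ℝ => ENNReal.ofReal t) (𝓝[>] (0:ℝ)) (𝓝 0) := by
      rw [← ENNReal.ofReal_zero]
      exact (ENNReal.continuous_ofReal.tendsto 0).comp nhdsWithin_le_nhds
    simpa using ENNReal.Tendsto.const_mul this (Or.inr C)
  have h2 : upperMink N A ((N:ℝ)+1)
      ≤ limsup (fun t : ℝ => volume (thickening (1:ℝ) A) * ENNReal.ofReal t) (𝓝[>] (0:ℝ)) := by
    apply limsup_le_limsup _ isCobounded_le_of_bot isBounded_le_of_top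
    filter_upwards [Ioo_mem_nhdsGT (zero_lt_one)] with t ht
    have hexp : ((N : ℝ) - ((N:ℝ)+1)) = (-1 : ℝ) := by ring
    rw [hexp, Real.rpow_neg_one, ENNReal.ofReal_inv_of_pos ht.1,
      div_eq_mul_inv, inv_inv]
    exact mul_le_mul' (measure_mono (thickening_mono ht.2.le A)) le_rfl
  rw [upperMink]
  exact le_antisymm (h2.trans_eq h1.limsup_eq) (zero_le)

lemma mink_zero_pos (hN : 1 ≤ N) (hA : A.Nonempty) : 0 < upperMink N A 0 := by
  obtain ⟨x, hx⟩ := hA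
  haveI : Nonempty (Fin N) := ⟨⟨0, hN⟩⟩
  haveI : Nontrivial (EuclideanSpace ℝ (Fin N)) := inferInstance
  set B := volume (ball (0 : EuclideanSpace ℝ (Fin N)) 1) with hBdef
  have hB : 0 < B := measure_ball_pos _ _ zero_lt_one
  refine lt_of_lt_of_le hB (le_limsup_of_frequently_le ?_ isBounded_le_of_top)
  apply Eventually.frequently
  filter_upwards [self_mem_nhdsWithin] with t ht
  have ht0 : (0:ℝ) < t := ht
  have hball : ball x t ⊆ thickening t A := ball_subset_thickening hx t
  have hvol : volume (ball x t) = ENNReal.ofReal (t ^ N) * B := by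
    rw [hBdef, Measure.addHaar_ball volume x ht0.le, finrank_euclideanSpace_fin]
  have hne0 : ENNReal.ofReal (t ^ ((N:ℝ) - 0)) ≠ 0 :=
    (ENNReal.ofReal_pos.mpr (Real.rpow_pos_of_pos ht0 _)).ne'
  rw [ENNReal.le_div_iff_mul_le (Or.inl hne0) (Or.inl ENNReal.ofReal_ne_top)]
  have : ENNReal.ofReal (t ^ ((N:ℝ) - 0)) = ENNReal.ofReal (t ^ N) := by
    rw [sub_zero, Real.rpow_natCast]
  rw [this, mul_comm, ← hvol]
  exact measure_mono hball

lemma zset_nonempty (hb : Bornology.IsBounded A) :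
    {r : ℝ | 0 < r ∧ upperMink N A r = 0}.Nonempty :=
  ⟨(N:ℝ)+1, by positivity, mink_top hb⟩

lemma zset_bdd : BddBelow {r : ℝ | 0 < r ∧ upperMink N A r = 0} :=
  ⟨0, fun r hr => hr.1.le⟩

lemma mink_zero_of_gt (hb : Bornology.IsBounded A) {r : ℝ} (hr : upperBoxDim N A < r) :
    upperMink N A r = 0 := by
  obtain ⟨r', hr'Z, hr'lt⟩ := exists_lt_of_csInf_lt (zset_nonempty hb) hr
  exact le_antisymm ((mink_antitone hr'lt.le).trans_eq hr'Z.2) (zero_le)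

lemma mink_pos_of_lt (hN : 1 ≤ N) (hA : A.Nonempty) {α : ℝ} (hα : α < upperBoxDim N A) :
    0 < upperMink N A α := by
  rcases le_or_gt α 0 with h0 | h0
  · exact lt_of_lt_of_le (mink_zero_pos hN hA) (mink_antitone h0)
  · rw [pos_iff_ne_zero]
    intro hz
    exact absurd (csInf_le zset_bdd ⟨h0, hz⟩) (not_le.mpr hα)

lemma h_meas (a : ℝ) :
    Measurable (fun t : ℝ => t ^ a * (volume (thickening t A)).toReal) :=
  (measurable_id.pow_const a).mul vol_meas.ennreal_toReal

lemma integrable_of_gt (hb : Bornology.IsBounded A) {α δ : ℝ} (hδ : 0 < δ)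
    (hα : upperBoxDim N A < α) :
    IntegrableOn (fun t : ℝ => t ^ (α - (N:ℝ) - 1) * (volume (thickening t A)).toReal)
      (Ioc 0 δ) volume := by
  set r : ℝ := (upperBoxDim N A + α)/2 with hrdef
  have hr1 : upperBoxDim N A < r := by rw [hrdef]; linarith
  have hr2 : r < α := by rw [hrdef]; linarith
  have hm : upperMink N A r = 0 := mink_zero_of_gt hb hr1
  have hev : ∀ᶠ t in 𝓝[>] (0:ℝ),
      volume (thickening t A) < ENNReal.ofReal (t ^ ((N:ℝ) - r)) := by
    have h1 : Filter.limsup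
        (fun t : ℝ => volume (thickening t A) / ENNReal.ofReal (t ^ ((N : ℝ) - r)))
        (𝓝[>] (0 : ℝ)) < 1 := by
      rw [show Filter.limsup
        (fun t : ℝ => volume (thickening t A) / ENNReal.ofReal (t ^ ((N : ℝ) - r)))
        (𝓝[>] (0 : ℝ)) = upperMink N A r from rfl, hm]; exact zero_lt_one
    filter_upwards [eventually_lt_of_limsup_lt h1, self_mem_nhdsWithin] with t h2 ht
    have ht0 : (0:ℝ) < t := ht
    have hd0 : ENNReal.ofReal (t ^ ((N:ℝ)-r)) ≠ 0 :=
      (ENNReal.ofReal_pos.mpr (Real.rpow_pos_of_pos ht0 _)).ne'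
    rwa [ENNReal.div_lt_iff (Or.inl hd0) (Or.inl ENNReal.ofReal_ne_top), one_mul] at h2
  obtain ⟨ε, hε, hsub⟩ := mem_nhdsGT_iff_exists_Ioo_subset.mp hev
  have hε0 : (0:ℝ) < ε := hε
  set m : ℝ := min (ε/2) δ with hmdef
  have hm0 : 0 < m := lt_min (half_pos hε0) hδ
  have hmδ : m ≤ δ := min_le_right _ _
  have hIoc : Ioc (0:ℝ) δ = Ioc 0 m ∪ Ioc m δ := (Ioc_union_Ioc_eq_Ioc hm0.le hmδ).symm
  rw [hIoc]
  apply IntegrableOn.union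
  · -- near zero
    have hint : IntegrableOn (fun t : ℝ => t ^ (α - r - 1)) (Ioc 0 m) volume := by
      have h3 : IntegrableOn (fun t : ℝ => t ^ (α - r - 1)) (Ioo 0 (m+1)) volume :=
        (intervalIntegral.integrableOn_Ioo_rpow_iff (by linarith)).mpr (by linarith)
      exact h3.mono_set (fun t ht => ⟨ht.1, lt_of_le_of_lt ht.2 (by linarith)⟩)
    apply Integrable.mono' hint ((h_meas _).aestronglyMeasurable.restrict)
    filter_upwards [ae_restrict_mem measurableSet_Ioc] with t ht
    have ht0 : 0 < t := ht.1
    have htε : t < ε := by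
      have := lt_of_le_of_lt (min_le_left (ε/2) δ) (by linarith : ε/2 < ε)
      calc t ≤ m := ht.2
        _ < ε := this
    have hP := hsub ⟨ht0, htε⟩
    rw [Real.norm_eq_abs, abs_of_nonneg
      (mul_nonneg (Real.rpow_nonneg ht0.le _) ENNReal.toReal_nonneg)]
    have h2 : (volume (thickening t A)).toReal ≤ t ^ ((N:ℝ) - r) :=
      ENNReal.toReal_le_of_le_ofReal (Real.rpow_nonneg ht0.le _) hP.le
    calc t ^ (α - (N:ℝ) - 1) * (volume (thickening t A)).toReal
        ≤ t ^ (α-(N:ℝ)-1) * t ^ ((N:ℝ)-r) :=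
          mul_le_mul_of_nonneg_left h2 (Real.rpow_nonneg ht0.le _)
      _ = t ^ (α - r - 1) := by
          rw [← Real.rpow_add ht0]; ring_nf
  · -- away from zero
    apply Measure.integrableOn_of_bounded (measure_Ioc_lt_top).ne
      (h_meas _).aestronglyMeasurable
      (M := (max (m ^ (α-(N:ℝ)-1)) (δ ^ (α-(N:ℝ)-1))) * (volume (thickening δ A)).toReal)
    filter_upwards [ae_restrict_mem measurableSet_Ioc] with t ht
    have htm : m < t := ht.1
    have ht0 : 0 < t := lt_trans hm0 htm
    have h1 : t ^ (α-(N:ℝ)-1) ≤ max (m ^ (α-(N:ℝ)-1)) (δ ^ (α-(N:ℝ)-1)) := by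
      rcases le_or_gt 0 (α-(N:ℝ)-1) with hc|hc
      · exact le_max_of_le_right (Real.rpow_le_rpow ht0.le ht.2 hc)
      · exact le_max_of_le_left (Real.rpow_le_rpow_of_nonpos hm0 htm.le hc.le)
    have h2 : (volume (thickening t A)).toReal ≤ (volume (thickening δ A)).toReal :=
      ENNReal.toReal_mono (vol_fin hb δ) (vol_mono ht.2)
    rw [Real.norm_eq_abs, abs_of_nonneg
      (mul_nonneg (Real.rpow_nonneg ht0.le _) ENNReal.toReal_nonneg)]
    exact mul_le_mul h1 h2 ENNReal.toReal_nonneg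
      (le_max_of_le_left (Real.rpow_nonneg hm0.le _))

lemma not_integrable_of_lt (hN : 1 ≤ N) (hA : A.Nonempty) (hb : Bornology.IsBounded A)
    {α δ : ℝ} (hδ : 0 < δ) (hα : α < upperBoxDim N A) (hαN : α < (N:ℝ)) :
    ¬ IntegrableOn (fun t : ℝ => t ^ (α - (N:ℝ) - 1) * (volume (thickening t A)).toReal)
      (Ioc 0 δ) volume := by
  intro hint
  set a : ℝ := α - (N:ℝ) - 1 with hadef
  have ha_neg : a < 0 := by rw [hadef]; linarith
  set L := upperMink N A α with hLdef
  have hL : 0 < L := mink_pos_of_lt hN hA hα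
  set c : ℝ≥0∞ := min L 1 / 2 with hcdef
  have hmin0 : min L 1 ≠ 0 := (lt_min hL zero_lt_one).ne'
  have hminT : min L 1 ≠ ∞ := ne_top_of_le_ne_top ENNReal.one_ne_top (min_le_right _ _)
  have hc0 : c ≠ 0 := (ENNReal.half_pos hmin0).ne'
  have hcT : c ≠ ∞ := ne_top_of_le_ne_top hminT ENNReal.half_le_self
  have hcL : c < L := lt_of_lt_of_le (ENNReal.half_lt_self hmin0 hminT) (min_le_left _ _)
  set c' := c.toReal with hc'def
  have hc' : 0 < c' := ENNReal.toReal_pos hc0 hcT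
  have hfreq : ∃ᶠ t in 𝓝[>] (0:ℝ),
      c < volume (thickening t A) / ENNReal.ofReal (t ^ ((N:ℝ) - α)) :=
    frequently_lt_of_lt_limsup isCobounded_le_of_bot hcL
  set g : ℝ → ℝ≥0∞ :=
    fun t => (‖t ^ a * (volume (thickening t A)).toReal‖₊ : ℝ≥0∞) with hgdef
  have hg_meas : Measurable g := (h_meas a).nnnorm.coe_nnreal_ennreal
  have hfin : ∫⁻ t in Ioc 0 δ, g t < ∞ := hint.2
  set κ : ℝ≥0∞ := ENNReal.ofReal (c' * 2 ^ a) with hκdef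
  have hκ0 : 0 < κ := ENNReal.ofReal_pos.mpr (by positivity)
  set s₀ : ℝ := min δ 1 with hs₀def
  have hs₀0 : 0 < s₀ := lt_min hδ zero_lt_one
  have hs₀δ : s₀ ≤ δ := min_le_left _ _
  have key : ∀ s : ℝ, 0 < s → s ≤ s₀ → κ ≤ ∫⁻ t in Ioc 0 s, g t := by
    intro s hs hss
    obtain ⟨t0, hc_lt, ht0mem⟩ :=
      (hfreq.and_eventually (Ioo_mem_nhdsGT (half_pos hs))).exists
    have ht0 : 0 < t0 := ht0mem.1
    have ht0s : t0 < s/2 := ht0mem.2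
    have hd0 : ENNReal.ofReal (t0 ^ ((N:ℝ) - α)) ≠ 0 :=
      (ENNReal.ofReal_pos.mpr (Real.rpow_pos_of_pos ht0 _)).ne'
    have h4 : c * ENNReal.ofReal (t0 ^ ((N:ℝ) - α)) < volume (thickening t0 A) :=
      (ENNReal.lt_div_iff_mul_lt (Or.inl hd0) (Or.inl ENNReal.ofReal_ne_top)).mp hc_lt
    have h5 : ENNReal.ofReal (c' * t0 ^ ((N:ℝ) - α)) ≤ volume (thickening t0 A) := by
      rw [ENNReal.ofReal_mul hc'.le, hc'def, ENNReal.ofReal_toReal hcT]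
      exact h4.le
    have h6 : c' * t0 ^ ((N:ℝ) - α) ≤ (volume (thickening t0 A)).toReal :=
      (ENNReal.ofReal_le_iff_le_toReal (vol_fin hb t0)).mp h5
    have hsub1 : Ioc t0 (2*t0) ⊆ Ioc 0 s :=
      fun t ht => ⟨lt_trans ht0 ht.1, le_trans ht.2 (by linarith)⟩
    have e1 : t0 ^ a * t0 ^ ((N:ℝ) - α) * t0 = 1 := by
      nth_rewrite 3 [← Real.rpow_one t0]
      rw [← Real.rpow_add ht0, ← Real.rpow_add ht0,
        show a + ((N:ℝ) - α) + 1 = 0 by rw [hadef]; ring, Real.rpow_zero]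
    have e2 : (2*t0) ^ a * (c' * t0 ^ ((N:ℝ) - α)) * t0 = c' * 2 ^ a := by
      calc (2*t0) ^ a * (c' * t0 ^ ((N:ℝ) - α)) * t0
          = 2 ^ a * c' * (t0 ^ a * t0 ^ ((N:ℝ) - α) * t0) := by
            rw [Real.mul_rpow two_pos.le ht0.le]; ring
        _ = c' * 2 ^ a := by rw [e1]; ring
    calc κ = ENNReal.ofReal ((2*t0) ^ a * (c' * t0 ^ ((N:ℝ) - α))) * volume (Ioc t0 (2*t0)) := by
          rw [Real.volume_Ioc, show 2*t0 - t0 = t0 by ring,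
            ← ENNReal.ofReal_mul (by positivity), e2, hκdef]
      _ ≤ ∫⁻ t in Ioc t0 (2*t0), g t := by
          rw [← setLIntegral_const (Ioc t0 (2*t0))
            (ENNReal.ofReal ((2*t0) ^ a * (c' * t0 ^ ((N:ℝ) - α))))]
          apply setLIntegral_mono' measurableSet_Ioc
          intro t ht
          have htpos : 0 < t := lt_trans ht0 ht.1
          have hb1 : (2*t0) ^ a ≤ t ^ a :=
            Real.rpow_le_rpow_of_nonpos htpos ht.2 ha_neg.le
          have hb2 : (volume (thickening t0 A)).toReal
              ≤ (volume (thickening t A)).toReal :=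
            ENNReal.toReal_mono (vol_fin hb t) (vol_mono ht.1.le)
          have hpt : (2*t0) ^ a * (c' * t0 ^ ((N:ℝ) - α))
              ≤ t ^ a * (volume (thickening t A)).toReal :=
            mul_le_mul hb1 (h6.trans hb2) (by positivity) (Real.rpow_nonneg htpos.le _)
          calc ENNReal.ofReal ((2*t0) ^ a * (c' * t0 ^ ((N:ℝ) - α)))
              ≤ ENNReal.ofReal (t ^ a * (volume (thickening t A)).toReal) :=
                ENNReal.ofReal_le_ofReal hpt
            _ ≤ g t := by
                rw [hgdef]
                simp only [← enorm_eq_nnnorm, Real.enorm_eq_ofReal_abs]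
                exact ENNReal.ofReal_le_ofReal (le_abs_self _)
      _ ≤ ∫⁻ t in Ioc 0 s, g t := lintegral_mono_set hsub1
  -- contradiction via continuity from above
  set μ' : Measure ℝ := volume.withDensity g with hμ'def
  have hμ'app : ∀ s : Set ℝ, MeasurableSet s → μ' s = ∫⁻ t in s, g t :=
    fun s hs => withDensity_apply g hs
  have hanti : Antitone (fun n : ℕ => Ioc (0:ℝ) (s₀ / (n+1))) := by
    intro i j hij
    apply Ioc_subset_Ioc le_rfl
    apply div_le_div_of_nonneg_left hs₀0.le (by positivity)
    exact_mod_cast by exact_mod_cast Nat.succ_le_succ hij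
  have hiInter : ⋂ n : ℕ, Ioc (0:ℝ) (s₀/(n+1)) = ∅ := by
    ext x
    simp only [mem_iInter, mem_Ioc, mem_empty_iff_false, iff_false, not_forall]
    by_cases hx0 : 0 < x
    · obtain ⟨n, hn⟩ := exists_nat_gt (s₀ / x)
      refine ⟨n, ?_⟩
      intro hcon
      have h7 : s₀ < n * x := (div_lt_iff₀ hx0).mp hn
      have h8 : x * ((n:ℝ)+1) ≤ s₀ := (le_div_iff₀ (by positivity)).mp hcon.2
      nlinarith
    · exact ⟨0, fun hcon => hx0 hcon.1⟩
  have hfin0 : μ' (Ioc (0:ℝ) (s₀ / ((0:ℕ)+1))) ≠ ∞ := by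
    rw [hμ'app _ measurableSet_Ioc]
    refine (lt_of_le_of_lt (lintegral_mono_set ?_) hfin).ne
    exact Ioc_subset_Ioc le_rfl (by norm_num; linarith)
  have htend := tendsto_measure_iInter_atTop (μ := μ')
    (fun n => measurableSet_Ioc.nullMeasurableSet) hanti ⟨0, hfin0⟩
  rw [hiInter, measure_empty] at htend
  have hev2 : ∀ n : ℕ, κ ≤ (μ' ∘ fun n : ℕ => Ioc (0:ℝ) (s₀/(n+1))) n := by
    intro n
    simp only [Function.comp_apply]
    rw [hμ'app _ measurableSet_Ioc]
    exact key _ (by positivity) (div_le_self hs₀0.le (by norm_num))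
  have hle : κ ≤ 0 := ge_of_tendsto htend (Eventually.of_forall hev2)
  exact absurd (le_antisymm hle (zero_le)) hκ0.ne'

end Aux

/-- if `dim̄_B A < N` then the abscissa of convergence of the tube zeta function
equals the upper box dimension: `inf {α ∈ ℝ : ∫_0^δ t^{α−N−1}|A_t| dt < ∞} = dim̄_B A`. -/
theorem stmt6 (N : ℕ) (hN : 1 ≤ N) (A : Set (EuclideanSpace ℝ (Fin N)))
    (hA : A.Nonempty) (hb : Bornology.IsBounded A) (hdim : upperBoxDim N A < N)
    (δ : ℝ) (hδ : 0 < δ) :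
    sInf {α : ℝ |
        IntegrableOn
          (fun t : ℝ => t ^ (α - (N : ℝ) - 1) * (volume (thickening t A)).toReal)
          (Ioc 0 δ) volume}
      = upperBoxDim N A := by
  set D := upperBoxDim N A with hDdef
  set S := {α : ℝ |
      IntegrableOn
        (fun t : ℝ => t ^ (α - (N : ℝ) - 1) * (volume (thickening t A)).toReal)
        (Ioc 0 δ) volume} with hSdef
  have hlb : ∀ α ∈ S, D ≤ α := by
    intro α hαS
    by_contra hcon
    push_neg at hcon
    exact not_integrable_of_lt hN hA hb hδ hcon (lt_trans hcon hdim) hαS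
  have hmem : ∀ α : ℝ, D < α → α ∈ S := fun α hα => integrable_of_gt hb hδ hα
  have hne : S.Nonempty := ⟨D + 1, hmem _ (lt_add_one D)⟩
  have hbdd : BddBelow S := ⟨D, hlb⟩
  refine le_antisymm ?_ (le_csInf hne hlb)
  apply le_of_forall_pos_le_add
  intro ε hε
  exact csInf_le hbdd (hmem _ (lt_add_of_pos_right D hε))
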